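/- Let a < b be real numbers and let f : ℝ → ℝ be convex on the closed interval [a, b]. Then for every finite sequence x₁, …, xₙ of real numbers all belonging to [a, b] (with n ≥ 1), one has (1/n) · ∑_{i=1}^n f(xᵢ) − f((1/n) · ∑_{i=1}^n xᵢ) ≤ f(a) + f(b) − 2 · f((a + b)/2). -/

import Mathlib

open Finset

lemma jensen_gap_key (a b : ℝ) (hab : a < b) (f : ℝ → ℝ)
    (hf : ConvexOn ℝ (Set.Icc a b) f) (t : ℝ) (ht0 : 0 ≤ t) (ht1 : t ≤ 1) :
    t * f a + (1 - t) * f b - f (t * a + (1 - t) * b) ≤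
      f a + f b - 2 * f ((a + b) / 2) := by
  have ha : a ∈ Set.Icc a b := Set.mem_Icc.2 ⟨le_refl a, le_of_lt hab⟩
  have hb : b ∈ Set.Icc a b := Set.mem_Icc.2 ⟨le_of_lt hab, le_refl b⟩
  have hu : t * a + (1 - t) * b ∈ Set.Icc a b := by
    constructor <;> nlinarith
  have hv : (1 - t) * a + t * b ∈ Set.Icc a b := by
    constructor <;> nlinarith
  have h1 : f ((1 - t) * a + t * b) ≤ (1 - t) * f a + t * f b := by
    have := hf.2 ha hb (by linarith : (0:ℝ) ≤ 1 - t) ht0 (by ring)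
    simpa using this
  have h2 : f ((1/2 : ℝ) * (t * a + (1 - t) * b) + (1/2 : ℝ) * ((1 - t) * a + t * b)) ≤
      (1/2 : ℝ) * f (t * a + (1 - t) * b) + (1/2 : ℝ) * f ((1 - t) * a + t * b) := by
    have := hf.2 hu hv (by norm_num : (0:ℝ) ≤ 1/2) (by norm_num : (0:ℝ) ≤ 1/2) (by norm_num)
    simpa using this
  have heq : (1/2 : ℝ) * (t * a + (1 - t) * b) + (1/2 : ℝ) * ((1 - t) * a + t * b) = (a + b) / 2 := by
    ring
  rw [heq] at h2
  linarith

theorem jensen_gap_global_bound (a b : ℝ) (hab : a < b) (f : ℝ → ℝ)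
    (hf : ConvexOn ℝ (Set.Icc a b) f) (n : ℕ) (hn : 1 ≤ n) (x : Fin n → ℝ)
    (hx : ∀ i, x i ∈ Set.Icc a b) :
    (1 / (n : ℝ)) * ∑ i, f (x i) - f ((1 / (n : ℝ)) * ∑ i, x i) ≤
      f a + f b - 2 * f ((a + b) / 2) := by
  have hn0 : (0:ℝ) < n := by exact_mod_cast hn
  have hba : (0:ℝ) < b - a := by linarith
  set S := ∑ i, x i with hS
  set m := (1 / (n : ℝ)) * S with hm
  have hSa : (n : ℝ) * a ≤ S := by
    have : ∑ _i : Fin n, a ≤ S := Finset.sum_le_sum (fun i _ => (hx i).1)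
    simpa [mul_comm] using this
  have hSb : S ≤ (n : ℝ) * b := by
    have : S ≤ ∑ _i : Fin n, b := Finset.sum_le_sum (fun i _ => (hx i).2)
    simpa [mul_comm] using this
  have hma : a ≤ m := by
    rw [hm]; rw [div_mul_eq_mul_div, le_div_iff₀ hn0]; linarith
  have hmb : m ≤ b := by
    rw [hm]; rw [div_mul_eq_mul_div, div_le_iff₀ hn0]; linarith
  set t := (b - m) / (b - a) with ht
  have ht0 : 0 ≤ t := div_nonneg (by linarith) (le_of_lt hba)
  have ht1 : t ≤ 1 := by
    rw [ht, div_le_one hba]; linarith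
  have hmeq : t * a + (1 - t) * b = m := by
    rw [ht]; field_simp; ring
  -- bound the mean of f values
  have hpoint : ∀ i, f (x i) ≤ (b - x i) / (b - a) * f a + (x i - a) / (b - a) * f b := by
    intro i
    have h0 : (0:ℝ) ≤ (b - x i) / (b - a) := div_nonneg (by linarith [(hx i).2]) (le_of_lt hba)
    have h1 : (0:ℝ) ≤ (x i - a) / (b - a) := div_nonneg (by linarith [(hx i).1]) (le_of_lt hba)
    have hsum : (b - x i) / (b - a) + (x i - a) / (b - a) = 1 := by
      field_simp
      ring
    have := hf.2 (Set.mem_Icc.2 ⟨le_refl a, le_of_lt hab⟩)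
      (Set.mem_Icc.2 ⟨le_of_lt hab, le_refl b⟩) h0 h1 hsum
    have harg : (b - x i) / (b - a) * a + (x i - a) / (b - a) * b = x i := by
      field_simp; ring
    simp only [smul_eq_mul] at this
    rw [harg] at this
    exact this
  have hsumf : ∑ i, f (x i) ≤ ∑ i, ((b - x i) / (b - a) * f a + (x i - a) / (b - a) * f b) :=
    Finset.sum_le_sum (fun i _ => hpoint i)
  have hsplit : ∑ i, ((b - x i) / (b - a) * f a + (x i - a) / (b - a) * f b)
      = ((n : ℝ) * b - S) / (b - a) * f a + (S - (n : ℝ) * a) / (b - a) * f b := by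
    rw [Finset.sum_add_distrib, ← Finset.sum_mul, ← Finset.sum_mul]
    congr 1
    · congr 1
      rw [← Finset.sum_div]
      congr 1
      rw [Finset.sum_sub_distrib]
      simp [hS, mul_comm]
    · congr 1
      rw [← Finset.sum_div]
      congr 1
      rw [Finset.sum_sub_distrib]
      simp [hS, mul_comm]
  have hmean : (1 / (n : ℝ)) * ∑ i, f (x i) ≤ t * f a + (1 - t) * f b := by
    have h := mul_le_mul_of_nonneg_left (hsumf.trans_eq hsplit)
      (by positivity : (0:ℝ) ≤ 1 / (n : ℝ))
    have hteq : (1 / (n : ℝ)) * (((n : ℝ) * b - S) / (b - a) * f a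
        + (S - (n : ℝ) * a) / (b - a) * f b) = t * f a + (1 - t) * f b := by
      rw [ht, hm]; field_simp; ring
    linarith [hteq ▸ h]
  have hkey := jensen_gap_key a b hab f hf t ht0 ht1
  rw [hmeq] at hkey
  linarith
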